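/- In the ring A = ℝ[X,Y]/(X²+Y²−1), the element y (the class of Y) is irreducible. -/

import Mathlib

noncomputable section CircleAux

open Polynomial

abbrev Rx := Polynomial ℝ

def gpoly : Polynomial Rx := X ^ 2 + C ((X : Rx) ^ 2 - 1)

lemma gpoly_monic : gpoly.Monic := monic_X_pow_add_C _ two_ne_zero

lemma gpoly_natDegree : gpoly.natDegree = 2 := natDegree_X_pow_add_C

lemma gpoly_degree : gpoly.degree = 2 := by
  rw [degree_eq_natDegree gpoly_monic.ne_zero, gpoly_natDegree]
  rfl

/-- `w = 1 - x²`. -/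
def wpoly : Rx := 1 - X ^ 2

abbrev Acirc := AdjoinRoot gpoly

open AdjoinRoot

lemma root_sq : (root gpoly) ^ 2 = of gpoly wpoly := by
  have h0 : mk gpoly (X ^ 2 + C ((X : Rx) ^ 2 - 1)) = 0 := mk_self
  rw [map_add, map_pow, mk_X, mk_C] at h0
  have h1 : of gpoly wpoly = - of gpoly ((X : Rx) ^ 2 - 1) := by
    rw [← map_neg]
    congr 1
    unfold wpoly
    ring
  rw [h1]
  linear_combination h0

lemma mul_formula (p q p' q' : Rx) :
    (of gpoly p + of gpoly q * root gpoly) * (of gpoly p' + of gpoly q' * root gpoly)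
      = of gpoly (p * p' + q * q' * wpoly) + of gpoly (p * q' + q * p') * root gpoly := by
  have h : (of gpoly p + of gpoly q * root gpoly) * (of gpoly p' + of gpoly q' * root gpoly)
      = of gpoly p * of gpoly p' + of gpoly q * of gpoly q' * (root gpoly ^ 2)
        + (of gpoly p * of gpoly q' + of gpoly q * of gpoly p') * root gpoly := by ring
  rw [h, root_sq]
  simp only [map_add, map_mul]
  try ring

lemma repr_exists (a : Acirc) : ∃ p q : Rx, a = of gpoly p + of gpoly q * root gpoly := by
  induction a using AdjoinRoot.induction_on with
  | ih f =>
    refine ⟨(f %ₘ gpoly).coeff 0, (f %ₘ gpoly).coeff 1, ?_⟩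
    have h1 : mk gpoly f = mk gpoly (f %ₘ gpoly) := by
      rw [mk_eq_mk]
      refine ⟨f /ₘ gpoly, ?_⟩
      have hmd := modByMonic_add_div f gpoly
      linear_combination -hmd
    have hdeg : (f %ₘ gpoly).degree ≤ 1 := by
      have hlt := degree_modByMonic_lt f gpoly_monic
      rw [gpoly_degree] at hlt
      exact Order.le_of_lt_succ (by exact_mod_cast hlt)
    have h2 : f %ₘ gpoly = C ((f %ₘ gpoly).coeff 1) * X + C ((f %ₘ gpoly).coeff 0) :=
      eq_X_add_C_of_degree_le_one hdeg
    rw [h1]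
    conv_lhs => rw [h2]
    rw [map_add, map_mul, mk_C, mk_C, mk_X]
    ring

lemma repr_unique {p q : Rx} (h : of gpoly p + of gpoly q * root gpoly = 0) :
    p = 0 ∧ q = 0 := by
  have h' : mk gpoly (C p + C q * X) = 0 := by
    rw [map_add, map_mul, mk_C, mk_C, mk_X]; exact h
  rw [mk_eq_zero] at h'
  have hz : C p + C q * X = 0 := by
    refine eq_zero_of_dvd_of_degree_lt h' ?_
    rw [gpoly_degree]
    have hle : (C p + C q * X).degree ≤ 1 := by
      refine (degree_add_le _ _).trans (max_le (degree_C_le.trans ?_) ?_)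
      · exact zero_le_one
      · exact (degree_mul_le _ _).trans
          (by simpa using add_le_add degree_C_le (degree_X (R := Rx)).le)
    exact lt_of_le_of_lt hle (by norm_num)
  constructor
  · have := congrArg (fun r => Polynomial.coeff r 0) hz
    simpa using this
  · have := congrArg (fun r => Polynomial.coeff r 1) hz
    simpa using this

lemma repr_eq {p q p' q' : Rx}
    (h : of gpoly p + of gpoly q * root gpoly = of gpoly p' + of gpoly q' * root gpoly) :
    p = p' ∧ q = q' := by
  have h0 : of gpoly (p - p') + of gpoly (q - q') * root gpoly = 0 := by
    rw [map_sub, map_sub, sub_mul]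
    linear_combination h
  obtain ⟨h1, h2⟩ := repr_unique h0
  exact ⟨sub_eq_zero.mp h1, sub_eq_zero.mp h2⟩

lemma isUnit_of_norm_const {p q : Rx} {c : ℝ} (hc : c ≠ 0)
    (h : p ^ 2 - q ^ 2 * wpoly = C c) : IsUnit (of gpoly p + of gpoly q * root gpoly) := by
  apply IsUnit.of_mul_eq_one
    ((of gpoly p + of gpoly (-q) * root gpoly) * of gpoly (C c⁻¹))
  rw [← mul_assoc, mul_formula]
  have h1 : p * (-q) + q * p = 0 := by ring
  have h2 : p * p + q * (-q) * wpoly = C c := by rw [← h]; ring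
  rw [h1, h2, map_zero, zero_mul, add_zero, ← map_mul, ← map_one (of gpoly)]
  congr 1
  rw [← C_mul, mul_inv_cancel₀ hc, C_1]

lemma even_natDegree_norm (p q : Rx) :
    Even ((p ^ 2 - q ^ 2 * wpoly).natDegree) := by
  have key : p ^ 2 - q ^ 2 * wpoly = p ^ 2 + q ^ 2 * (X ^ 2 - C 1) := by
    unfold wpoly; rw [C_1]; ring
  rw [key]
  rcases eq_or_ne q 0 with hq | hq
  · simp [hq, natDegree_pow]
  have hX2 : ((X : Rx) ^ 2 - C 1) ≠ 0 := by
    intro h0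
    have h2 : ((X : Rx) ^ 2 - C 1).natDegree = 2 := natDegree_X_pow_sub_C
    rw [h0] at h2
    simp at h2
  rcases eq_or_ne p 0 with hp | hp
  · simp only [hp, zero_pow, ne_eq, OfNat.ofNat_ne_zero, not_false_eq_true, zero_add]
    rw [natDegree_mul (pow_ne_zero _ hq) hX2, natDegree_pow, natDegree_X_pow_sub_C]
    exact ⟨q.natDegree + 1, by ring⟩
  have hdA : (p ^ 2).natDegree = 2 * p.natDegree := by rw [natDegree_pow]; try ring
  have hdB : (q ^ 2 * ((X : Rx) ^ 2 - C 1)).natDegree = 2 * q.natDegree + 2 := by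
    rw [natDegree_mul (pow_ne_zero _ hq) hX2, natDegree_pow, natDegree_X_pow_sub_C]; try ring
  rcases lt_trichotomy ((p ^ 2).natDegree) ((q ^ 2 * ((X : Rx) ^ 2 - C 1)).natDegree)
    with hlt | heq | hgt
  · rw [natDegree_add_eq_right_of_natDegree_lt hlt, hdB]
    exact ⟨q.natDegree + 1, by ring⟩
  · have hlp : p.leadingCoeff ≠ 0 := leadingCoeff_ne_zero.mpr hp
    have hlq : q.leadingCoeff ≠ 0 := leadingCoeff_ne_zero.mpr hq
    have hcoefA : (p ^ 2).coeff ((p ^ 2).natDegree) = p.leadingCoeff ^ 2 := by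
      rw [← leadingCoeff, leadingCoeff_pow]
    have hcoefB : (q ^ 2 * ((X : Rx) ^ 2 - C 1)).coeff ((p ^ 2).natDegree)
        = q.leadingCoeff ^ 2 := by
      rw [heq, ← leadingCoeff, leadingCoeff_mul, leadingCoeff_pow,
        (monic_X_pow_sub_C (1 : ℝ) two_ne_zero).leadingCoeff, mul_one]
    have hposlc : 0 < p.leadingCoeff ^ 2 + q.leadingCoeff ^ 2 := by
      have h1 : 0 < p.leadingCoeff ^ 2 :=
        lt_of_le_of_ne (sq_nonneg _) (Ne.symm (pow_ne_zero 2 hlp))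
      nlinarith [sq_nonneg q.leadingCoeff]
    have hpos : (p ^ 2 + q ^ 2 * ((X : Rx) ^ 2 - C 1)).coeff ((p ^ 2).natDegree) ≠ 0 := by
      rw [coeff_add, hcoefA, hcoefB]
      exact ne_of_gt hposlc
    have hle : (p ^ 2 + q ^ 2 * ((X : Rx) ^ 2 - C 1)).natDegree ≤ (p ^ 2).natDegree := by
      refine (natDegree_add_le _ _).trans ?_
      rw [heq]
      simp
    have hge : (p ^ 2).natDegree ≤ (p ^ 2 + q ^ 2 * ((X : Rx) ^ 2 - C 1)).natDegree :=
      le_natDegree_of_ne_zero hpos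
    have heq2 : (p ^ 2 + q ^ 2 * ((X : Rx) ^ 2 - C 1)).natDegree = (p ^ 2).natDegree :=
      le_antisymm hle hge
    rw [heq2, hdA]
    exact ⟨p.natDegree, by ring⟩
  · rw [natDegree_add_eq_left_of_natDegree_lt hgt, hdA]
    exact ⟨p.natDegree, by ring⟩

lemma wpoly_natDegree : wpoly.natDegree = 2 := by
  have h : wpoly = -((X : Rx) ^ 2 - C 1) := by unfold wpoly; rw [C_1]; ring
  rw [h, natDegree_neg, natDegree_X_pow_sub_C]

lemma root_irreducible : Irreducible (root gpoly) := by
  constructor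
  · rintro hu
    obtain ⟨b, hb⟩ := isUnit_iff_exists_inv.mp hu
    obtain ⟨p, q, rfl⟩ := repr_exists b
    have hcalc : root gpoly * (of gpoly p + of gpoly q * root gpoly)
        = of gpoly (q * wpoly) + of gpoly p * root gpoly := by
      have h : root gpoly * (of gpoly p + of gpoly q * root gpoly)
          = of gpoly q * root gpoly ^ 2 + of gpoly p * root gpoly := by ring
      rw [h, root_sq, ← map_mul]
    rw [hcalc] at hb
    have hb' : of gpoly (q * wpoly) + of gpoly p * root gpoly
        = of gpoly 1 + of gpoly 0 * root gpoly := by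
      rw [map_one, map_zero, zero_mul, add_zero, hb]
    obtain ⟨h1, _⟩ := repr_eq hb'
    have hq0 : q ≠ 0 := by
      rintro rfl
      rw [zero_mul] at h1
      exact one_ne_zero h1.symm
    have hw0 : wpoly ≠ 0 := by
      intro h0
      rw [h0, mul_zero] at h1
      exact one_ne_zero h1.symm
    have hdeg : (q * wpoly).natDegree = 0 := by rw [h1, natDegree_one]
    rw [natDegree_mul hq0 hw0, wpoly_natDegree] at hdeg
    omega
  · rintro a b hab
    obtain ⟨p, q, rfl⟩ := repr_exists a
    obtain ⟨p', q', rfl⟩ := repr_exists b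
    rw [mul_formula] at hab
    have hab' : of gpoly 0 + of gpoly 1 * root gpoly
        = of gpoly (p * p' + q * q' * wpoly) + of gpoly (p * q' + q * p') * root gpoly := by
      rw [map_one, map_zero, one_mul, zero_add]; exact hab
    obtain ⟨heq1, heq2⟩ := repr_eq hab'
    have hnorm : (p ^ 2 - q ^ 2 * wpoly) * (p' ^ 2 - q' ^ 2 * wpoly) = -wpoly := by
      linear_combination (p * p' + q * q' * wpoly) * heq1.symm
        - wpoly * (p * q' + q * p' + 1) * heq2.symm
    have hwne : -wpoly ≠ 0 := by
      intro h0
      have h2 : wpoly.natDegree = 2 := wpoly_natDegree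
      rw [show wpoly = 0 by simpa using h0] at h2
      simp at h2
    have hM : (p ^ 2 - q ^ 2 * wpoly) ≠ 0 := by
      intro h0; rw [h0, zero_mul] at hnorm; exact hwne hnorm.symm
    have hM' : (p' ^ 2 - q' ^ 2 * wpoly) ≠ 0 := by
      intro h0; rw [h0, mul_zero] at hnorm; exact hwne hnorm.symm
    have hdeg : (p ^ 2 - q ^ 2 * wpoly).natDegree + (p' ^ 2 - q' ^ 2 * wpoly).natDegree = 2 := by
      rw [← natDegree_mul hM hM', hnorm, natDegree_neg, wpoly_natDegree]
    obtain ⟨k, hk⟩ := even_natDegree_norm p q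
    obtain ⟨k', hk'⟩ := even_natDegree_norm p' q'
    have hcases : (p ^ 2 - q ^ 2 * wpoly).natDegree = 0
        ∨ (p' ^ 2 - q' ^ 2 * wpoly).natDegree = 0 := by omega
    rcases hcases with h0 | h0
    · left
      have hC := eq_C_of_natDegree_eq_zero h0
      refine isUnit_of_norm_const (c := (p ^ 2 - q ^ 2 * wpoly).coeff 0) ?_ hC
      intro hc; rw [hc, C_0] at hC; exact hM hC
    · right
      have hC := eq_C_of_natDegree_eq_zero h0
      refine isUnit_of_norm_const (c := (p' ^ 2 - q' ^ 2 * wpoly).coeff 0) ?_ hC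
      intro hc; rw [hc, C_0] at hC; exact hM' hC

noncomputable def e2 : MvPolynomial (Fin 1) ℝ ≃+* Rx :=
  (MvPolynomial.finSuccEquiv ℝ 0).toRingEquiv.trans
    (Polynomial.mapEquiv (MvPolynomial.isEmptyAlgEquiv ℝ (Fin 0)).toRingEquiv)

noncomputable def e1 : MvPolynomial (Fin 2) ℝ ≃+* Polynomial Rx :=
  (MvPolynomial.renameEquiv ℝ (Equiv.swap (0 : Fin 2) 1)).toRingEquiv.trans
    ((MvPolynomial.finSuccEquiv ℝ 1).toRingEquiv.trans (Polynomial.mapEquiv e2))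

lemma e1_X1 : e1 (MvPolynomial.X 1) = Polynomial.X := by
  rw [e1]
  simp only [RingEquiv.trans_apply, AlgEquiv.toRingEquiv_eq_coe, AlgEquiv.coe_ringEquiv]
  rw [MvPolynomial.renameEquiv_apply, MvPolynomial.rename_X, Equiv.swap_apply_right,
    MvPolynomial.finSuccEquiv_X_zero, Polynomial.mapEquiv_apply, Polynomial.map_X]

lemma e2_X0 : e2 (MvPolynomial.X 0) = Polynomial.X := by
  rw [e2]
  simp only [RingEquiv.trans_apply, AlgEquiv.toRingEquiv_eq_coe, AlgEquiv.coe_ringEquiv]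
  rw [MvPolynomial.finSuccEquiv_X_zero, Polynomial.mapEquiv_apply, Polynomial.map_X]

lemma e1_X0 : e1 (MvPolynomial.X 0) = Polynomial.C Polynomial.X := by
  rw [e1]
  simp only [RingEquiv.trans_apply, AlgEquiv.toRingEquiv_eq_coe, AlgEquiv.coe_ringEquiv]
  rw [MvPolynomial.renameEquiv_apply, MvPolynomial.rename_X, Equiv.swap_apply_left,
    show (1 : Fin 2) = Fin.succ 0 from rfl, MvPolynomial.finSuccEquiv_X_succ,
    Polynomial.mapEquiv_apply, Polynomial.map_C]
  exact congrArg Polynomial.C e2_X0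

lemma e1_gen :
    e1 ((MvPolynomial.X 0 : MvPolynomial (Fin 2) ℝ) ^ 2 + MvPolynomial.X 1 ^ 2 - 1) = gpoly := by
  rw [map_sub, map_add, map_pow, map_pow, map_one, e1_X0, e1_X1, gpoly,
    ← Polynomial.C_pow, Polynomial.C_sub, Polynomial.C_1]
  ring

end CircleAux

open MvPolynomial

theorem stmt_4 :
    Irreducible
      (Ideal.Quotient.mk
        (Ideal.span {(X 0 : MvPolynomial (Fin 2) ℝ) ^ 2 + X 1 ^ 2 - 1})
        (X 1)) := by
  have hIJ : Ideal.span {gpoly}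
      = (Ideal.span {(X 0 : MvPolynomial (Fin 2) ℝ) ^ 2 + X 1 ^ 2 - 1}).map
        (e1 : MvPolynomial (Fin 2) ℝ →+* Polynomial Rx) := by
    rw [Ideal.map_span, Set.image_singleton]
    exact congrArg (fun t => Ideal.span {t}) e1_gen.symm
  have key2 : (Ideal.quotientEquiv _ _ e1 hIJ).toMulEquiv
      (Ideal.Quotient.mk (Ideal.span {(X 0 : MvPolynomial (Fin 2) ℝ) ^ 2 + X 1 ^ 2 - 1}) (X 1))
      = AdjoinRoot.root gpoly := by
    show (Ideal.quotientEquiv _ _ e1 hIJ)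
      (Ideal.Quotient.mk (Ideal.span {(X 0 : MvPolynomial (Fin 2) ℝ) ^ 2 + X 1 ^ 2 - 1}) (X 1)) = _
    rw [Ideal.quotientEquiv_mk, e1_X1]
    rfl
  have h1 : Irreducible ((Ideal.quotientEquiv _ _ e1 hIJ).toMulEquiv
      (Ideal.Quotient.mk (Ideal.span {(X 0 : MvPolynomial (Fin 2) ℝ) ^ 2 + X 1 ^ 2 - 1}) (X 1))) := by
    rw [key2]; exact root_irreducible
  exact (MulEquiv.irreducible_iff _).mp h1
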